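/- Let ω₀ ∈ (0,1), s₁, s₂ ∈ (0,2) and θ ∈ ℝ with cos θ ≠ 1, and let p₀, p₁, p₂ be the coefficients of the characteristic polynomial of the MRT-LB scheme. Then 1 − p₀ + p₁ − p₂ = (2−s₁)(2−s₂)(1 + cos θ) + s₁s₂ω₀(1 − cos θ), and this quantity is strictly positive. -/
import Mathlib


/-- For `ω₀ ∈ (0,1)`, `s₁, s₂ ∈ (0,2)` and `cos θ ≠ 1`, one has
`1 − p₀ + p₁ − p₂ = (2−s₁)(2−s₂)(1+cos θ) + s₁s₂ω₀(1−cos θ) > 0`. -/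
theorem routh_condition_one
    (ω₀ s₁ s₂ θ p₀ p₁ p₂ : ℝ)
    (hω₀ : ω₀ ∈ Set.Ioo (0 : ℝ) 1)
    (hs₁ : s₁ ∈ Set.Ioo (0 : ℝ) 2)
    (hs₂ : s₂ ∈ Set.Ioo (0 : ℝ) 2)
    (hθ : Real.cos θ ≠ 1)
    (hp₀ : p₀ = (s₁ - 1) * (1 - s₂))
    (hp₁ : p₁ = (s₁ - 1) * (s₂ * ω₀ - 1)
      + ((s₁ - 2) * (s₂ - 1) + s₂ * ω₀ * (1 - s₁)) * Real.cos θ)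
    (hp₂ : p₂ = s₂ - s₂ * ω₀ - 1 + (s₂ * ω₀ + s₁ - 2) * Real.cos θ) :
    1 - p₀ + p₁ - p₂ =
      (2 - s₁) * (2 - s₂) * (1 + Real.cos θ)
        + s₁ * s₂ * ω₀ * (1 - Real.cos θ) ∧
    0 < 1 - p₀ + p₁ - p₂ := by
  obtain ⟨hω0, hω1⟩ := hω₀
  obtain ⟨h10, h12⟩ := hs₁
  obtain ⟨h20, h22⟩ := hs₂
  have hc1 : Real.cos θ < 1 := lt_of_le_of_ne (Real.cos_le_one θ) hθ
  have hc2 : -1 ≤ Real.cos θ := Real.neg_one_le_cos θ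
  have heq : 1 - p₀ + p₁ - p₂ =
      (2 - s₁) * (2 - s₂) * (1 + Real.cos θ)
        + s₁ * s₂ * ω₀ * (1 - Real.cos θ) := by
    subst hp₀ hp₁ hp₂; ring
  refine ⟨heq, ?_⟩
  rw [heq]
  have h1 : 0 ≤ (2 - s₁) * (2 - s₂) * (1 + Real.cos θ) := by
    apply mul_nonneg (mul_nonneg (by linarith) (by linarith)) (by linarith)
  have h2 : 0 < s₁ * s₂ * ω₀ * (1 - Real.cos θ) := by
    apply mul_pos (mul_pos (mul_pos h10 h20) hω0) (by linarith)
  linarith
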